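/- Let M be a symmetric irreducible r×r 0–1 transition matrix and let A : Σ̂_M → ℝ be Lipschitz continuous. For each β > 0, let φ_β be a forward effective potential for βA and λ_β the effective constant, i.e. G⁺_{βA}(φ_β) = φ_β + λ_β. Then the family {φ_β/β}_{β>0} is equi-Lipschitz: for every β > 0 and all y, ȳ ∈ Σ*_M, |φ_β(y) − φ_β(ȳ)| ≤ β (‖A‖₀ + Lip(A)) d(y,ȳ); equivalently Lip(φ_β/β) ≤ ‖A‖₀ + Lip(A). -/
import Mathlib


open MeasureTheory Filter Topology Real

/-- The one-sided subshift of finite type defined by the 0-1 transition matrix `M`: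
sequences `x : ℕ → Fin r` with `M (x j) (x (j+1)) = 1` for all `j`. -/
abbrev Shift (r : ℕ) (M : Fin r → Fin r → Bool) : Type :=
  {x : ℕ → Fin r // ∀ j : ℕ, M (x j) (x (j + 1)) = true}

variable {r : ℕ} {M : Fin r → Fin r → Bool}

/-- The matrix `M` is irreducible: any symbol can be joined to any other by an
admissible path of positive length. -/
def Irred (M : Fin r → Fin r → Bool) : Prop :=
  ∀ i j : Fin r, ∃ n : ℕ, ∃ w : Fin (n + 2) → Fin r,
    w 0 = i ∧ w (Fin.last (n + 1)) = j ∧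
    ∀ k : Fin (n + 1), M (w k.castSucc) (w k.succ) = true

/-- The left shift map on the subshift. -/
def shiftMap (x : Shift r M) : Shift r M :=
  ⟨fun j => x.1 (j + 1), fun j => x.2 (j + 1)⟩

/-- The metric `d(x,y) = Λ^k`, `k = min { j : x_j ≠ y_j }`, `d(x,x) = 0`. -/
noncomputable def shiftDist (Λ : ℝ) (x y : Shift r M) : ℝ :=
  letI := Classical.decEq (Shift r M)
  if h : x = y then 0
  else Λ ^ Nat.find (show ∃ j : ℕ, x.1 j ≠ y.1 j by
    by_contra hc
    push_neg at hc
    exact h (Subtype.ext (funext hc)))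

/-- `φ` is Lipschitz with constant `K` for the metric `shiftDist Λ`. -/
def LipBnd (Λ K : ℝ) (φ : Shift r M → ℝ) : Prop :=
  ∀ x y : Shift r M, |φ x - φ y| ≤ K * shiftDist Λ x y

/-- `φ` is Lipschitz continuous for the metric `shiftDist Λ`. -/
def IsLip (Λ : ℝ) (φ : Shift r M → ℝ) : Prop :=
  ∃ K : ℝ, LipBnd Λ K φ

/-- The best Lipschitz constant of `φ`. -/
noncomputable def lipC (Λ : ℝ) (φ : Shift r M → ℝ) : ℝ :=
  sInf {K : ℝ | 0 ≤ K ∧ LipBnd Λ K φ}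

/-- The uniform norm `‖φ‖₀`. -/
noncomputable def unorm (φ : Shift r M → ℝ) : ℝ :=
  ⨆ x : Shift r M, |φ x|

/-- An observable on the natural extension `Σ̂_M ⊂ Σ*_M × Σ_M` (with `Σ*_M`
canonically identified with `Σ_M`), as a function of `(y, x)`; it is Lipschitz with
constant `K` for the max-metric. -/
def LipBnd2 (Λ K : ℝ) (A : Shift r M → Shift r M → ℝ) : Prop :=
  ∀ y x y' x' : Shift r M,
    |A y x - A y' x'| ≤ K * max (shiftDist Λ y y') (shiftDist Λ x x')

/-- `A` is Lipschitz continuous on `Σ̂_M`. -/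
def IsLip2 (Λ : ℝ) (A : Shift r M → Shift r M → ℝ) : Prop :=
  ∃ K : ℝ, LipBnd2 Λ K A

/-- The best Lipschitz constant of the observable `A`. -/
noncomputable def lipC2 (Λ : ℝ) (A : Shift r M → Shift r M → ℝ) : ℝ :=
  sInf {K : ℝ | 0 ≤ K ∧ LipBnd2 Λ K A}

/-- The uniform norm `‖A‖₀` of the observable. -/
noncomputable def unorm2 (A : Shift r M → Shift r M → ℝ) : ℝ :=
  ⨆ p : Shift r M × Shift r M, |A p.1 p.2|

/-- `μ` is a `σ`-invariant Borel probability measure on the subshift. -/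
def InvProb (μ : Measure (Shift r M)) : Prop :=
  IsProbabilityMeasure μ ∧ μ.map shiftMap = μ

/-- Entropy of the cylinder partition of length `n`:
`H_n(μ) = - ∑_{|w| = n} μ([w]) log μ([w])`. -/
noncomputable def cylEnt (μ : Measure (Shift r M)) (n : ℕ) : ℝ :=
  ∑ w : Fin n → Fin r,
    Real.negMulLog ((μ {x : Shift r M | ∀ i : Fin n, x.1 i.1 = w i}).toReal)

/-- The Kolmogorov–Sinai entropy `h_μ(σ)` of an invariant measure on the subshift:
since the cylinder partition is generating and `n ↦ H_n(μ)` is subadditive,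
`h_μ(σ) = lim_n H_n(μ)/n = inf_n H_n(μ)/n`. -/
noncomputable def entropy (μ : Measure (Shift r M)) : ℝ :=
  ⨅ n : ℕ, cylEnt μ (n + 1) / (n + 1)

/-- The operator
`G⁺_A(φ)(y) = sup_{μ ∈ M_σ} [ ∫ (A(y,x) + φ(x)) dμ(x) + h_μ(σ) ]`. -/
noncomputable def Gplus (A : Shift r M → Shift r M → ℝ)
    (φ : Shift r M → ℝ) (y : Shift r M) : ℝ :=
  sSup {t : ℝ | ∃ μ : Measure (Shift r M), InvProb μ ∧
    t = ∫ x, (A y x + φ x) ∂μ + entropy μ}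

/-- The maximal ergodic average `max_{μ ∈ M_σ} ∫ B dμ`. -/
noncomputable def maxErg (B : Shift r M → ℝ) : ℝ :=
  sSup {t : ℝ | ∃ μ : Measure (Shift r M), InvProb μ ∧ t = ∫ x, B x ∂μ}

/-- The quotient norm on functions modulo additive constants:
`‖g‖_c = inf_{γ ∈ ℝ} ‖g + γ‖₀`. -/
noncomputable def cnorm (g : Shift r M → ℝ) : ℝ :=
  ⨅ γ : ℝ, unorm (fun x => g x + γ)


section AuxLemmas

variable {r : ℕ} {M : Fin r → Fin r → Bool}

lemma shiftDist_nonneg' {Λ : ℝ} (hΛ : 0 < Λ) (x y : Shift r M) :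
    0 ≤ shiftDist Λ x y := by
  unfold shiftDist
  split_ifs with h
  · exact le_rfl
  · positivity

lemma shiftDist_self' {Λ : ℝ} (x : Shift r M) : shiftDist Λ x x = 0 := by
  unfold shiftDist
  simp

lemma shiftDist_le_pow' {Λ : ℝ} (hΛ0 : 0 < Λ) (hΛ1 : Λ ≤ 1) {x y : Shift r M} {n : ℕ}
    (h : ∀ i < n, x.1 i = y.1 i) : shiftDist Λ x y ≤ Λ ^ n := by
  unfold shiftDist
  split_ifs with he
  · positivity
  · apply pow_le_pow_of_le_one hΛ0.le hΛ1
    rw [Nat.le_find_iff]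
    intro m hm
    simpa using h m hm

lemma measurable_of_lipBnd {Λ K : ℝ} (hΛ0 : 0 < Λ) (hΛ1 : Λ < 1)
    {h : Shift r M → ℝ} (hh : ∀ x y, |h x - h y| ≤ K * shiftDist Λ x y) :
    Measurable h := by
  classical
  set K' := max K 0 with hK'def
  have hh' : ∀ x y, |h x - h y| ≤ K' * shiftDist Λ x y := fun x y =>
    (hh x y).trans (mul_le_mul_of_nonneg_right (le_max_left _ _) (shiftDist_nonneg' hΛ0 x y))
  have hK'0 : 0 ≤ K' := le_max_right _ _
  set q : ∀ n : ℕ, (Fin n → Fin r) → ℝ := fun n w =>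
    if hw : ∃ z : Shift r M, ∀ i : Fin n, z.1 i.1 = w i then h hw.choose else 0 with hq
  set g : ℕ → Shift r M → ℝ := fun n x => q n (fun i => x.1 i.1) with hgdef
  have hmeasg : ∀ n, Measurable (g n) := by
    intro n
    have hproj : Measurable (fun x : Shift r M => fun i : Fin n => x.1 i.1) :=
      measurable_pi_lambda _ (fun i => (measurable_pi_apply i.1).comp measurable_subtype_coe)
    haveI : MeasurableSingletonClass (Fin n → Fin r) := by
      constructor
      intro w
      have : ({w} : Set (Fin n → Fin r)) = ⋂ i, {v | v i = w i} := by
        ext v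
        simp [funext_iff, Set.mem_iInter]
      rw [this]
      refine MeasurableSet.iInter fun i => ?_
      have h2 : {v : Fin n → Fin r | v i = w i} = (fun v => v i) ⁻¹' {w i} := rfl
      rw [h2]
      exact (measurable_pi_apply i) (measurableSet_singleton (w i))
    exact (measurable_of_countable (q n)).comp hproj
  have htends : ∀ x, Filter.Tendsto (fun n => g n x) Filter.atTop (nhds (h x)) := by
    intro x
    have hbound : ∀ n, |g n x - h x| ≤ K' * Λ ^ n := by
      intro n
      have hx : ∃ z : Shift r M, ∀ i : Fin n, z.1 i.1 = (fun i : Fin n => x.1 i.1) i :=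
        ⟨x, fun i => rfl⟩
      have hgx : g n x = h hx.choose := by
        simp only [hgdef, hq]
        rw [dif_pos hx]
      have hspec := hx.choose_spec
      have hagree : ∀ i < n, hx.choose.1 i = x.1 i := fun i hi => hspec ⟨i, hi⟩
      have hd : shiftDist Λ hx.choose x ≤ Λ ^ n := shiftDist_le_pow' hΛ0 hΛ1.le hagree
      calc |g n x - h x| = |h hx.choose - h x| := by rw [hgx]
        _ ≤ K' * shiftDist Λ hx.choose x := hh' _ _
        _ ≤ K' * Λ ^ n := mul_le_mul_of_nonneg_left hd hK'0
    have hlim0 : Filter.Tendsto (fun n : ℕ => K' * Λ ^ n) Filter.atTop (nhds 0) := by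
      have := (tendsto_pow_atTop_nhds_zero_of_lt_one hΛ0.le hΛ1).const_mul K'
      simpa using this
    have hdist : Filter.Tendsto (fun n => dist (g n x) (h x)) Filter.atTop (nhds 0) := by
      apply squeeze_zero (fun n => dist_nonneg) (fun n => ?_) hlim0
      rw [Real.dist_eq]
      exact hbound n
    exact tendsto_iff_dist_tendsto_zero.mpr hdist
  exact measurable_of_tendsto_metrizable hmeasg (tendsto_pi_nhds.mpr htends)

lemma lipBnd2_lipC2 {Λ : ℝ} (hΛ0 : 0 < Λ) {A : Shift r M → Shift r M → ℝ}
    (hA : IsLip2 Λ A) : LipBnd2 Λ (lipC2 Λ A) A := by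
  obtain ⟨K, hK⟩ := hA
  have hmem : max K 0 ∈ {K : ℝ | 0 ≤ K ∧ LipBnd2 Λ K A} := by
    refine ⟨le_max_right _ _, fun y x y' x' => (hK y x y' x').trans ?_⟩
    exact mul_le_mul_of_nonneg_right (le_max_left _ _)
      (le_max_of_le_left (shiftDist_nonneg' hΛ0 _ _))
  intro y x y' x'
  set m := max (shiftDist Λ y y') (shiftDist Λ x x') with hm
  have hm0 : 0 ≤ m := le_max_of_le_left (shiftDist_nonneg' hΛ0 _ _)
  rcases hm0.eq_or_lt with h0 | h0
  · have hb := hmem.2 y x y' x'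
    rw [← hm, ← h0, mul_zero] at hb
    rw [← h0, mul_zero]
    exact hb
  · rw [← div_le_iff₀ h0]
    apply le_csInf ⟨_, hmem⟩
    intro K' hK'
    rw [div_le_iff₀ h0]
    exact hK'.2 y x y' x'

lemma lipC2_nonneg {Λ : ℝ} (A : Shift r M → Shift r M → ℝ) : 0 ≤ lipC2 Λ A :=
  Real.sInf_nonneg fun _ hK => hK.1

lemma csSup_abs_sub_le {S T : Set ℝ} {D : ℝ} (hD : 0 ≤ D)
    (hST : ∀ s ∈ S, ∃ t ∈ T, |s - t| ≤ D) (hTS : ∀ t ∈ T, ∃ s ∈ S, |t - s| ≤ D) :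
    |sSup S - sSup T| ≤ D := by
  rcases S.eq_empty_or_nonempty with hS | hS
  · have hT : T = ∅ := by
      by_contra h
      obtain ⟨t, ht⟩ := Set.nonempty_iff_ne_empty.mpr h
      obtain ⟨s, hs, _⟩ := hTS t ht
      simp [hS] at hs
    simp [hS, hT, Real.sSup_empty, hD]
  by_cases hTb : BddAbove T
  · have hT : T.Nonempty := by
      obtain ⟨s, hs⟩ := hS
      obtain ⟨t, ht, _⟩ := hST s hs
      exact ⟨t, ht⟩
    have hSb : BddAbove S := by
      obtain ⟨c, hc⟩ := hTb
      refine ⟨c + D, fun s hs => ?_⟩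
      obtain ⟨t, ht, hst⟩ := hST s hs
      have h1 := abs_le.1 hst
      have h2 := hc ht
      linarith [h1.2]
    rw [abs_sub_le_iff]
    constructor
    · rw [sub_le_iff_le_add]
      apply csSup_le hS
      intro s hs
      obtain ⟨t, ht, hst⟩ := hST s hs
      have h1 := abs_le.1 hst
      have h2 := le_csSup hTb ht
      linarith [h1.2]
    · rw [sub_le_iff_le_add]
      apply csSup_le hT
      intro t ht
      obtain ⟨s, hs, hts⟩ := hTS t ht
      have h1 := abs_le.1 hts
      have h2 := le_csSup hSb hs
      linarith [h1.2]
  · have hSb : ¬ BddAbove S := by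
      rintro ⟨c, hc⟩
      apply hTb
      refine ⟨c + D, fun t ht => ?_⟩
      obtain ⟨s, hs, hts⟩ := hTS t ht
      have h1 := abs_le.1 hts
      have h2 := hc hs
      linarith [h1.2]
    rw [Real.sSup_of_not_bddAbove hSb, Real.sSup_of_not_bddAbove hTb]
    simpa using hD

end AuxLemmas

/-- If `φ_β` is a forward effective potential for `βA` with effective
constant `λ_β` (i.e. `G⁺_{βA}(φ_β) = φ_β + λ_β`) for every `β > 0`, then the family
`{φ_β/β}` is equi-Lipschitz: `|φ_β(y) − φ_β(ȳ)| ≤ β (‖A‖₀ + Lip(A)) d(y,ȳ)`. -/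
theorem effective_potential_equilipschitz
    (r : ℕ) (hr : 2 ≤ r) (M : Fin r → Fin r → Bool)
    (hSym : ∀ i j, M i j = M j i) (hIrr : Irred M)
    (Λ : ℝ) (hΛ : Λ ∈ Set.Ioo (0 : ℝ) 1)
    (A : Shift r M → Shift r M → ℝ) (hA : IsLip2 Λ A)
    (φ : ℝ → Shift r M → ℝ) (lam : ℝ → ℝ)
    (heff : ∀ β > (0 : ℝ), IsLip Λ (φ β) ∧
      ∀ y, Gplus (fun y x => β * A y x) (φ β) y = φ β y + lam β) :
    ∀ β > (0 : ℝ), (∀ y ybar : Shift r M,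
        |φ β y - φ β ybar| ≤ β * (unorm2 A + lipC2 Λ A) * shiftDist Λ y ybar) ∧
      LipBnd Λ (unorm2 A + lipC2 Λ A) (fun y => φ β y / β) := by
  obtain ⟨hΛ0, hΛ1⟩ := hΛ
  intro β hβ
  have hA0 : 0 ≤ unorm2 A := Real.iSup_nonneg fun p => abs_nonneg _
  have hL := lipBnd2_lipC2 hΛ0 hA
  have hL0 : 0 ≤ lipC2 Λ A := lipC2_nonneg A
  -- Lipschitz bound in the second variable, for fixed first variable
  have hmA : ∀ y' : Shift r M, Measurable (fun x => A y' x) := by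
    intro y'
    apply measurable_of_lipBnd hΛ0 hΛ1 (K := lipC2 Λ A)
    intro x x'
    have h1 := hL y' x y' x'
    rwa [shiftDist_self', max_eq_right (shiftDist_nonneg' hΛ0 x x')] at h1
  have key : ∀ y ybar : Shift r M,
      |φ β y - φ β ybar| ≤ β * lipC2 Λ A * shiftDist Λ y ybar := by
    intro y ybar
    set D := β * lipC2 Λ A * shiftDist Λ y ybar with hDdef
    have hd0 : 0 ≤ shiftDist Λ y ybar := shiftDist_nonneg' hΛ0 y ybar
    have hD0 : 0 ≤ D := mul_nonneg (mul_nonneg hβ.le hL0) hd0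
    -- pointwise bound on the difference of integrands
    set g : Shift r M → ℝ := fun x => β * A y x - β * A ybar x with hgdef
    have hgb : ∀ x, ‖g x‖ ≤ D := by
      intro x
      have h1 := hL y x ybar x
      rw [shiftDist_self', max_eq_left hd0] at h1
      have : g x = β * (A y x - A ybar x) := by simp only [hgdef]; ring
      rw [this, Real.norm_eq_abs, abs_mul, abs_of_pos hβ]
      calc β * |A y x - A ybar x| ≤ β * (lipC2 Λ A * shiftDist Λ y ybar) :=
            mul_le_mul_of_nonneg_left h1 hβ.le
        _ = D := by rw [hDdef]; ring
    have hgm : Measurable g := ((hmA y).const_mul β).sub ((hmA ybar).const_mul β)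
    have hint : ∀ μ : Measure (Shift r M), InvProb μ →
        |(∫ x, (β * A y x + φ β x) ∂μ) - ∫ x, (β * A ybar x + φ β x) ∂μ| ≤ D := by
      intro μ hμ
      haveI := hμ.1
      have hgi : Integrable g μ :=
        (integrable_const D).mono' hgm.aestronglyMeasurable (Filter.Eventually.of_forall hgb)
      by_cases hi : Integrable (fun x => β * A ybar x + φ β x) μ
      · have hfy : (fun x => β * A y x + φ β x) =
            fun x => (β * A ybar x + φ β x) + g x := by
          funext x
          simp only [hgdef]
          ring
        rw [hfy, integral_add hi hgi, add_sub_cancel_left]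
        have := norm_integral_le_of_norm_le_const (μ := μ)
          (Filter.Eventually.of_forall hgb)
        simpa [Real.norm_eq_abs] using this
      · have hi' : ¬ Integrable (fun x => β * A y x + φ β x) μ := by
          intro hcon
          apply hi
          have hfyb : (fun x => β * A ybar x + φ β x) =
              fun x => (β * A y x + φ β x) - g x := by
            funext x
            simp only [hgdef]
            ring
          rw [hfyb]
          exact hcon.sub hgi
        rw [integral_undef hi, integral_undef hi']
        simpa using hD0
    have hG : |Gplus (fun y x => β * A y x) (φ β) y -
        Gplus (fun y x => β * A y x) (φ β) ybar| ≤ D := by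
      apply csSup_abs_sub_le hD0
      · rintro s ⟨μ, hμ, rfl⟩
        refine ⟨_, ⟨μ, hμ, rfl⟩, ?_⟩
        have := hint μ hμ
        simpa [add_sub_add_right_eq_sub] using this
      · rintro t ⟨μ, hμ, rfl⟩
        refine ⟨_, ⟨μ, hμ, rfl⟩, ?_⟩
        have := hint μ hμ
        rw [abs_sub_comm] at this
        simpa [add_sub_add_right_eq_sub] using this
    have heq := (heff β hβ).2
    have hsub : φ β y - φ β ybar = Gplus (fun y x => β * A y x) (φ β) y -
        Gplus (fun y x => β * A y x) (φ β) ybar := by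
      have h1 := heq y
      have h2 := heq ybar
      linarith
    rw [hsub]
    exact hG
  refine ⟨fun y ybar => ?_, fun y ybar => ?_⟩
  · refine (key y ybar).trans ?_
    have hd0 : 0 ≤ shiftDist Λ y ybar := shiftDist_nonneg' hΛ0 y ybar
    nlinarith [mul_nonneg (mul_nonneg hβ.le hA0) hd0]
  · have hk := key y ybar
    have hd0 : 0 ≤ shiftDist Λ y ybar := shiftDist_nonneg' hΛ0 y ybar
    rw [div_sub_div_same, abs_div, abs_of_pos hβ, div_le_iff₀ hβ]
    nlinarith [mul_nonneg (mul_nonneg hβ.le hA0) hd0]
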